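/- Let S be a numerical semigroup generated by a nonempty set M of positive integers. Then 2m - 1 ∈ S for all m ∈ M if and only if 2s - 1 ∈ S for all nonzero s ∈ S. -/

import Mathlib

theorem double_sub_one_mem_iff (M : Set ℕ) (hM : M.Nonempty) (hpos : ∀ m ∈ M, 0 < m) :
    (∀ m ∈ M, 2 * m - 1 ∈ AddSubmonoid.closure M) ↔
      (∀ s ∈ AddSubmonoid.closure M, s ≠ 0 → 2 * s - 1 ∈ AddSubmonoid.closure M) := by
  constructor
  · intro h
    have key : ∀ s ∈ AddSubmonoid.closure M, s = 0 ∨ 2 * s - 1 ∈ AddSubmonoid.closure M := by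
      intro s hs
      induction hs using AddSubmonoid.closure_induction with
      | mem x hx => exact Or.inr (h x hx)
      | zero => exact Or.inl rfl
      | add a b ha hb iha ihb =>
        rcases Nat.eq_zero_or_pos a with rfl | hapos
        · simpa using ihb
        · refine Or.inr ?_
          have iha : 2 * a - 1 ∈ AddSubmonoid.closure M := iha.resolve_left (by omega)
          have : 2 * (a + b) - 1 = (2 * a - 1) + (b + b) := by omega
          rw [this]
          exact AddSubmonoid.add_mem _ iha (AddSubmonoid.add_mem _ hb hb)
    intro s hs hne
    exact (key s hs).resolve_left hne
  · intro h m hm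
    exact h m (AddSubmonoid.subset_closure hm) (hpos m hm).ne'
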